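/- Let E and F be real normed vector spaces, m ≥ 1, and let M be a continuous symmetric m-multilinear map from E^m to F (i.e. M : ContinuousMultilinearMap ℝ (fun _ : Fin m => E) F with M invariant under every permutation of its arguments). If there is a nonempty open set U ⊆ E such that M(v, v, …, v) = 0 for every v ∈ U, then M = 0. -/

import Mathlib

open Finset in
private lemma aux_group {β : Type*} [DecidableEq β] {G : Type*} [AddCommMonoid G] [Module ℝ G]
    (s : Finset β) (c : Finset β → G) (t : ℝ) :
    ∑ x ∈ s.powerset, t ^ x.card • c x
      = ∑ j ∈ Finset.range (s.card + 1), t ^ j • ∑ x ∈ s.powersetCard j, c x := by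
  trans ∑ j ∈ Finset.range (s.card + 1), ∑ x ∈ s.powerset with x.card = j, t ^ x.card • c x
  · refine (Finset.sum_fiberwise_of_maps_to ?_ _).symm
    intro x hx
    rw [Finset.mem_range, Nat.lt_succ_iff]
    exact Finset.card_le_card (Finset.mem_powerset.1 hx)
  · refine Finset.sum_congr rfl fun j _ => ?_
    rw [Finset.smul_sum, Finset.powersetCard_eq_filter]
    exact Finset.sum_congr rfl fun x hx => by rw [(Finset.mem_filter.1 hx).2]

private lemma aux_coeff {F : Type*} [NormedAddCommGroup F] [NormedSpace ℝ F]
    (n : ℕ) (c : ℕ → F) (s : Set ℝ) (hs : s.Infinite)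
    (h : ∀ t ∈ s, ∑ j ∈ Finset.range n, t ^ j • c j = 0) :
    ∀ j < n, c j = 0 := by
  intro j hj
  apply NormedSpace.eq_zero_of_forall_dual_eq_zero ℝ
  intro g
  set p : Polynomial ℝ := ∑ i ∈ Finset.range n, Polynomial.C (g (c i)) * Polynomial.X ^ i with hp
  have hval : ∀ t ∈ s, p.IsRoot t := by
    intro t ht
    have h2 := congrArg g (h t ht)
    rw [map_zero] at h2
    show p.eval t = 0
    rw [hp, Polynomial.eval_finset_sum, ← h2, map_sum]
    refine Finset.sum_congr rfl fun i _ => ?_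
    rw [Polynomial.eval_mul, Polynomial.eval_C, Polynomial.eval_pow, Polynomial.eval_X,
      g.map_smul, smul_eq_mul, mul_comm]
  have hp0 : p = 0 := p.eq_zero_of_infinite_isRoot (hs.mono hval)
  have hco : p.coeff j = 0 := by rw [hp0]; simp
  rw [hp, Polynomial.finset_sum_coeff] at hco
  simp only [Polynomial.coeff_C_mul, Polynomial.coeff_X_pow, mul_ite, mul_one, mul_zero] at hco
  rwa [Finset.sum_ite_eq (Finset.range n) j, if_pos (Finset.mem_range.2 hj)] at hco

/-- polarization: a continuous symmetric `m`-multilinear map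
vanishing on the diagonal over a nonempty open set vanishes identically. -/
theorem stmt9 {E F : Type*}
    [NormedAddCommGroup E] [NormedSpace ℝ E]
    [NormedAddCommGroup F] [NormedSpace ℝ F]
    (m : ℕ) (hm : 1 ≤ m)
    (M : ContinuousMultilinearMap ℝ (fun _ : Fin m => E) F)
    (hsymm : ∀ (v : Fin m → E) (σ : Equiv.Perm (Fin m)), M (v ∘ σ) = M v)
    (U : Set E) (hU : IsOpen U) (hUne : U.Nonempty)
    (hdiag : ∀ v ∈ U, M (fun _ => v) = 0) :
    M = 0 := by
  classical
  obtain ⟨u, huU⟩ := hUne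
  obtain ⟨ε, hε, hball⟩ := Metric.isOpen_iff.1 hU u huU
  -- Step 1: the diagonal vanishes everywhere.
  have hdiag' : ∀ x : E, M (fun _ => x) = 0 := by
    intro x
    have hx1 : (0 : ℝ) < ‖x‖ + 1 := by positivity
    set δ : ℝ := ε / (‖x‖ + 1) with hδ
    have hδ0 : 0 < δ := div_pos hε hx1
    set c : ℕ → F := fun j => ∑ s ∈ (Finset.univ : Finset (Fin m)).powersetCard j,
      M (s.piecewise (fun _ => x) (fun _ => u)) with hc
    have key : ∀ t ∈ Set.Ioo (-δ) δ, ∑ j ∈ Finset.range (m + 1), t ^ j • c j = 0 := by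
      intro t ht
      have htabs : |t| < δ := abs_lt.2 ⟨ht.1, ht.2⟩
      have hmem : u + t • x ∈ U := by
        apply hball
        rw [Metric.mem_ball, dist_eq_norm]
        have h1 : ‖u + t • x - u‖ = |t| * ‖x‖ := by
          rw [add_sub_cancel_left, norm_smul, Real.norm_eq_abs]
        rw [h1]
        calc |t| * ‖x‖ ≤ |t| * (‖x‖ + 1) := by
              exact mul_le_mul_of_nonneg_left (by linarith) (abs_nonneg t)
          _ < δ * (‖x‖ + 1) := by
              exact mul_lt_mul_of_pos_right htabs hx1
          _ = ε := by rw [hδ]; field_simp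
      have h0 : M (fun _ => u + t • x) = 0 := hdiag _ hmem
      have hexp := M.map_piecewise_add (fun _ : Fin m => t • x) (fun _ => u) Finset.univ
      rw [Finset.piecewise_univ] at hexp
      have hlhs : (((fun _ : Fin m => t • x) + fun _ => u)) = fun _ : Fin m => u + t • x := by
        funext i; simp [add_comm]
      rw [hlhs, h0] at hexp
      have hterm : ∀ s ∈ (Finset.univ : Finset (Fin m)).powerset,
          M (s.piecewise (fun _ => t • x) (fun _ => u))
            = t ^ s.card • M (s.piecewise (fun _ => x) (fun _ => u)) := by
        intro s _
        set b : Fin m → E := s.piecewise (fun _ => x) (fun _ => u) with hb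
        have heq : s.piecewise (fun _ : Fin m => t • x) (fun _ => u)
            = s.piecewise (fun i => t • b i) b := by
          funext i
          by_cases hi : i ∈ s
          · simp [Finset.piecewise_eq_of_mem _ _ _ hi, hb]
          · simp [hb, Finset.piecewise_eq_of_notMem _ _ _ hi]
        rw [heq, M.map_piecewise_smul, Finset.prod_const]
      rw [Finset.sum_congr rfl hterm] at hexp
      rw [aux_group] at hexp
      simpa [hc, Finset.card_univ] using hexp.symm
    have hcm := aux_coeff (m + 1) c _ (Set.Ioo_infinite (by linarith)) key m (Nat.lt_succ_self m)
    have huniv : (Finset.univ : Finset (Fin m)).powersetCard m = {Finset.univ} := by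
      have h5 := Finset.powersetCard_self (Finset.univ : Finset (Fin m))
      rwa [Finset.card_univ, Fintype.card_fin] at h5
    rw [hc] at hcm
    simp only [huniv, Finset.sum_singleton, Finset.piecewise_univ] at hcm
    exact hcm
  -- Step 2: induction, freeing arguments one at a time.
  have key2 : ∀ k, k ≤ m → ∀ (w : Fin m → E) (v : E),
      M (fun i : Fin m => if (i : ℕ) < k then w i else v) = 0 := by
    intro k
    induction k with
    | zero => intro _ w v; simpa using hdiag' v
    | succ k ih =>
      intro hk w v
      have hkm : k < m := hk
      set pk : Fin m := ⟨k, hkm⟩ with hpk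
      set z : E := w pk with hz
      set K : Finset (Fin m) := {i : Fin m | (i : ℕ) < k} with hK
      set a : Fin m → E := fun i : Fin m => if (i : ℕ) < k then w i else v with ha
      set c : Finset (Fin m) → F := fun s => M (s.piecewise (fun _ => z) a) with hc
      have expand : ∀ t : ℝ,
          ∑ j ∈ Finset.range (Kᶜ.card + 1), t ^ j • ∑ s ∈ Kᶜ.powersetCard j, c s = 0 := by
        intro t
        have h0 : M (fun i : Fin m => if (i : ℕ) < k then w i else v + t • z) = 0 :=
          ih (le_of_lt hkm) w (v + t • z)
        have hexp := M.map_piecewise_add (fun _ : Fin m => t • z) a Kᶜ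
        have hpw : (Kᶜ).piecewise ((fun _ : Fin m => t • z) + a) a
            = fun i : Fin m => if (i : ℕ) < k then w i else v + t • z := by
          funext i
          by_cases hi : (i : ℕ) < k
          · have hiK : i ∉ Kᶜ := by simpa [hK] using hi
            rw [Finset.piecewise_eq_of_notMem _ _ _ hiK, if_pos hi]
            simp only [ha]
            rw [if_pos hi]
          · have hiK : i ∈ Kᶜ := by simpa [hK] using hi
            rw [Finset.piecewise_eq_of_mem _ _ _ hiK, if_neg hi, Pi.add_apply]
            simp only [ha]
            rw [if_neg hi, add_comm]
        rw [hpw, h0] at hexp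
        have hterm : ∀ s ∈ Kᶜ.powerset,
            M (s.piecewise (fun _ => t • z) a) = t ^ s.card • c s := by
          intro s _
          set b : Fin m → E := s.piecewise (fun _ => z) a with hb
          have heq : s.piecewise (fun _ : Fin m => t • z) a
              = s.piecewise (fun i => t • b i) b := by
            funext i
            by_cases hi : i ∈ s
            · simp [Finset.piecewise_eq_of_mem _ _ _ hi, hb]
            · simp [hb, Finset.piecewise_eq_of_notMem _ _ _ hi]
          rw [heq, M.map_piecewise_smul, Finset.prod_const, hc]
        rw [Finset.sum_congr rfl hterm, aux_group] at hexp
        exact hexp.symm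
      have hpkK : pk ∈ Kᶜ := by simp [hK, hpk]
      have hcard : 0 < Kᶜ.card := Finset.card_pos.2 ⟨pk, hpkK⟩
      have h1 := aux_coeff (Kᶜ.card + 1) (fun j => ∑ s ∈ Kᶜ.powersetCard j, c s)
        Set.univ Set.infinite_univ (fun t _ => expand t) 1 (by omega)
      simp only [Finset.powersetCard_one, Finset.sum_map, Function.Embedding.coeFn_mk] at h1
      have hcs : ∀ i ∈ Kᶜ, c {i} = M (fun j : Fin m => if (j : ℕ) < k + 1 then w j else v) := by
        intro i hi
        have hik : ¬ ((i : ℕ) < k) := by simpa [hK] using hi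
        have hVT : ((({i} : Finset (Fin m)).piecewise (fun _ => z) a) ∘ (Equiv.swap pk i))
            = fun j : Fin m => if (j : ℕ) < k + 1 then w j else v := by
          funext j
          simp only [Function.comp_apply]
          by_cases hj1 : j = pk
          · subst hj1
            rw [Equiv.swap_apply_left]
            rw [Finset.piecewise_eq_of_mem _ _ _ (Finset.mem_singleton_self i)]
            have : ((pk : Fin m) : ℕ) < k + 1 := by simp [hpk]
            rw [if_pos this, hz]
          · by_cases hj2 : j = i
            · subst hj2
              have hne : j ≠ pk := hj1
              rw [Equiv.swap_apply_right]
              have hpks : pk ∉ ({j} : Finset (Fin m)) := by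
                simp [Finset.mem_singleton]; exact fun h => hne h.symm
              rw [Finset.piecewise_eq_of_notMem _ _ _ hpks]
              have h3 : ¬ ((j : ℕ) < k + 1) := by
                have : (j : ℕ) ≠ k := fun h => hne (Fin.ext h)
                omega
              rw [if_neg h3]
              simp [ha, hpk]
            · rw [Equiv.swap_apply_of_ne_of_ne hj1 hj2]
              have hjs : j ∉ ({i} : Finset (Fin m)) := by simpa using hj2
              rw [Finset.piecewise_eq_of_notMem _ _ _ hjs]
              simp only [ha]
              by_cases hjk : (j : ℕ) < k
              · rw [if_pos hjk, if_pos (by omega)]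
              · have : (j : ℕ) ≠ k := fun h => hj1 (Fin.ext h)
                rw [if_neg hjk, if_neg (by omega)]
        have hsy := hsymm (({i} : Finset (Fin m)).piecewise (fun _ => z) a) (Equiv.swap pk i)
        rw [hVT] at hsy
        rw [hc]
        exact hsy.symm
      rw [Finset.sum_congr rfl hcs, Finset.sum_const] at h1
      have hT : M (fun j : Fin m => if (j : ℕ) < k + 1 then w j else v) = 0 := by
        have h2 : (Kᶜ.card : ℝ) • M (fun j : Fin m => if (j : ℕ) < k + 1 then w j else v) = 0 := by
          rw [Nat.cast_smul_eq_nsmul]; exact h1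
        rcases smul_eq_zero.1 h2 with h | h
        · exfalso
          have : (Kᶜ.card : ℝ) ≠ 0 := Nat.cast_ne_zero.2 (by omega)
          exact this h
        · exact h
      exact hT
  ext w
  have := key2 m le_rfl w 0
  have heq : (fun i : Fin m => if (i : ℕ) < m then w i else 0) = w := by
    funext i; rw [if_pos i.isLt]
  rw [heq] at this
  simpa using this
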